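/- For the Gibbs state ρ_G = e^{-βH_i}/Z_i with H_i = Σ_i E_i A_i, and for projective final measurement B_f with final energies E'_f, the Jarzynski equality holds for the operational quasiprobability: Σ_{i,f} q^OQ_{if} e^{-β(E'_f - E_i)} = Z_f/Z_i, where Z_i = Σ_i (rank A_i) e^{-βE_i} and Z_f = Σ_f (rank B_f) e^{-βE'_f}. -/

import Mathlib

open Matrix ComplexOrder

attribute [local instance] Matrix.linftyOpNormedRing Matrix.linftyOpNormedAlgebra

section Aux

variable {d : ℕ}

lemma orth_mul (A : Fin d → Matrix (Fin d) (Fin d) ℂ)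
    (hAproj : ∀ i, A i * A i = A i)
    (hAorth : ∀ i i', i ≠ i' → A i * A i' = 0) (c b : Fin d → ℂ) :
    (∑ i, c i • A i) * (∑ j, b j • A j) = ∑ i, (c i * b i) • A i := by
  rw [Finset.sum_mul_sum]
  refine Finset.sum_congr rfl fun i _ => ?_
  rw [Finset.sum_eq_single i]
  · rw [smul_mul_assoc, mul_smul_comm, hAproj i, smul_smul]
  · intro j _ hj
    rw [smul_mul_assoc, mul_smul_comm, hAorth i j (Ne.symm hj), smul_zero, smul_zero]
  · intro h; exact absurd (Finset.mem_univ i) h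

lemma orth_pow (A : Fin d → Matrix (Fin d) (Fin d) ℂ)
    (hAproj : ∀ i, A i * A i = A i)
    (hAorth : ∀ i i', i ≠ i' → A i * A i' = 0)
    (hAsum : ∑ i, A i = 1) (c : Fin d → ℂ) (n : ℕ) :
    (∑ i, c i • A i) ^ n = ∑ i, (c i ^ n) • A i := by
  induction n with
  | zero => simp [hAsum]
  | succ n ih =>
      rw [pow_succ, ih, orth_mul A hAproj hAorth]
      simp [pow_succ]

lemma orth_exp (A : Fin d → Matrix (Fin d) (Fin d) ℂ)
    (hAproj : ∀ i, A i * A i = A i)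
    (hAorth : ∀ i i', i ≠ i' → A i * A i' = 0)
    (hAsum : ∑ i, A i = 1) (c : Fin d → ℂ) :
    NormedSpace.exp (∑ i, c i • A i) = ∑ i, Complex.exp (c i) • A i := by
  rw [NormedSpace.exp_eq_tsum ℂ]
  have h1 : ∀ n : ℕ, (((n.factorial : ℕ) : ℂ)⁻¹ • (∑ i, c i • A i) ^ n)
      = ∑ i, ((((n.factorial : ℕ) : ℂ)⁻¹ * c i ^ n) • A i) := by
    intro n
    rw [orth_pow A hAproj hAorth hAsum, Finset.smul_sum]
    simp [smul_smul]
  simp_rw [h1]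
  rw [Summable.tsum_finsetSum (fun i _ => ?_)]
  · refine Finset.sum_congr rfl fun i _ => ?_
    have hs : Summable fun n : ℕ => ((n.factorial : ℕ) : ℂ)⁻¹ * c i ^ n := by
      simpa [smul_eq_mul] using NormedSpace.expSeries_summable' (𝕂 := ℂ) (c i)
    rw [Summable.tsum_smul_const hs]
    congr 1
    rw [Complex.exp_eq_exp_ℂ, NormedSpace.exp_eq_tsum ℂ]
    simp [smul_eq_mul]
  · have hs : Summable fun n : ℕ => ((n.factorial : ℕ) : ℂ)⁻¹ * c i ^ n := by
      simpa [smul_eq_mul] using NormedSpace.expSeries_summable' (𝕂 := ℂ) (c i)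
    exact hs.smul_const _

lemma trace_eq_rank {d : ℕ} (P : Matrix (Fin d) (Fin d) ℂ) (hP : P.IsHermitian)
    (h : P * P = P) : P.trace = (P.rank : ℂ) := by
  classical
  set U : Matrix (Fin d) (Fin d) ℂ := (hP.eigenvectorUnitary : Matrix (Fin d) (Fin d) ℂ) with hUdef
  have hU : U * star U = 1 := Matrix.mem_unitaryGroup_iff.mp hP.eigenvectorUnitary.2
  have hU' : star U * U = 1 := Matrix.mem_unitaryGroup_iff'.mp hP.eigenvectorUnitary.2
  have hD : star U * P * U = diagonal (RCLike.ofReal ∘ hP.eigenvalues) :=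
    by have h0 := hP.conjStarAlgAut_star_eigenvectorUnitary; rw [Unitary.conjStarAlgAut_star_apply] at h0; exact h0
  have key : (star U * P * U) * (star U * P * U) = star U * P * U := by
    calc (star U * P * U) * (star U * P * U)
        = star U * (P * (U * star U) * P) * U := by noncomm_ring
      _ = star U * (P * P) * U := by rw [hU, mul_one]
      _ = star U * P * U := by rw [h]
  rw [hD, diagonal_mul_diagonal] at key
  have hev : ∀ i, hP.eigenvalues i = 0 ∨ hP.eigenvalues i = 1 := by
    intro i
    have := congrFun (congrArg (fun M => M.diag) key) i
    simp only [diag_diagonal, Function.comp_apply, Pi.mul_apply] at this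
    have h2 : hP.eigenvalues i * hP.eigenvalues i = hP.eigenvalues i := by
      exact_mod_cast this
    have h3 : hP.eigenvalues i * (hP.eigenvalues i - 1) = 0 := by ring_nf; linarith [h2]
    rcases mul_eq_zero.mp h3 with h0 | h1
    · exact Or.inl h0
    · exact Or.inr (by linarith)
  have htr : P.trace = ∑ i, (hP.eigenvalues i : ℂ) := by
    conv_lhs => rw [hP.spectral_theorem]
    rw [Unitary.conjStarAlgAut_apply, Matrix.trace_mul_comm, ← mul_assoc, hU', one_mul, Matrix.trace_diagonal]
    rfl
  rw [htr, hP.rank_eq_card_non_zero_eigs]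
  rw [Fintype.card_subtype]
  have : ∀ i, (hP.eigenvalues i : ℂ) = if hP.eigenvalues i ≠ 0 then 1 else 0 := by
    intro i
    rcases hev i with h0 | h0 <;> simp [h0]
  rw [Finset.sum_congr rfl (fun i _ => this i)]
  rw [Finset.card_filter]
  push_cast
  refine Finset.sum_congr rfl fun i _ => ?_
  by_cases h0 : hP.eigenvalues i = 0 <;> simp [h0]

/-- Jarzynski equality for the operational quasiprobability with a
Gibbs initial state `ρ_G = e^{-βH_i}/Z_i`. -/
theorem oq_jarzynski (d : ℕ) (hd : 0 < d) (β : ℝ) (hβ : 0 < β)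
    (A : Fin d → Matrix (Fin d) (Fin d) ℂ)
    (hAherm : ∀ i, (A i).IsHermitian) (hAproj : ∀ i, A i * A i = A i)
    (hAorth : ∀ i i', i ≠ i' → A i * A i' = 0)
    (hAsum : ∑ i, A i = 1)
    (B : Fin d → Matrix (Fin d) (Fin d) ℂ)
    (hBherm : ∀ f, (B f).IsHermitian) (hBproj : ∀ f, B f * B f = B f)
    (hBorth : ∀ f f', f ≠ f' → B f * B f' = 0)
    (hBsum : ∑ f, B f = 1)
    (E E' : Fin d → ℝ)
    (Hi : Matrix (Fin d) (Fin d) ℂ) (hHi : Hi = ∑ i, (E i : ℂ) • A i)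
    (Zi : ℝ) (hZi : Zi = ∑ i, ((A i).rank : ℝ) * Real.exp (-β * E i))
    (Zf : ℝ) (hZf : Zf = ∑ f, ((B f).rank : ℝ) * Real.exp (-β * E' f))
    (ρG : Matrix (Fin d) (Fin d) ℂ)
    (hρG : ρG = ((Zi : ℂ))⁻¹ • NormedSpace.exp ((-(β : ℂ)) • Hi))
    (q : Fin d → Fin d → ℂ)
    (hq : ∀ i f, q i f = (A i * ρG * A i * B f).trace +
      (1 / (d : ℂ)) * ((ρG * B f).trace - ∑ i', (A i' * ρG * A i' * B f).trace)) :
    ∑ i, ∑ f, q i f * Complex.exp (-(β : ℂ) * ((E' f : ℂ) - (E i : ℂ))) =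
      (Zf : ℂ) / (Zi : ℂ) := by
  classical
  set w : Fin d → ℂ := fun i => ((Real.exp (-β * E i) : ℝ) : ℂ) with hw
  have hwc : ∀ i, w i = Complex.exp (-(β : ℂ) * (E i : ℂ)) := by
    intro i
    rw [hw]
    rw [show (-(β : ℂ)) * (E i : ℂ) = ((-β * E i : ℝ) : ℂ) by push_cast; ring]
    exact Complex.ofReal_exp _
  have hexp : NormedSpace.exp ((-(β : ℂ)) • Hi) = ∑ i, w i • A i := by
    rw [hHi, Finset.smul_sum]
    simp_rw [smul_smul]
    rw [orth_exp A hAproj hAorth hAsum]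
    exact Finset.sum_congr rfl fun i _ => by rw [hwc i]
  have hρ : ρG = ∑ i, (((Zi : ℂ))⁻¹ * w i) • A i := by
    rw [hρG, hexp, Finset.smul_sum]
    simp [smul_smul]
  have hAρA : ∀ i, A i * ρG * A i = (((Zi : ℂ))⁻¹ * w i) • A i := by
    intro i
    have step : A i * ρG * A i = ∑ j, (((Zi : ℂ))⁻¹ * w j) • (A i * A j * A i) := by
      rw [hρ, Finset.mul_sum, Finset.sum_mul]
      exact Finset.sum_congr rfl fun j _ => by
        rw [mul_smul_comm, smul_mul_assoc]
    rw [step, Finset.sum_eq_single i]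
    · rw [hAproj i, hAproj i]
    · intro j _ hj
      rw [hAorth i j (Ne.symm hj), zero_mul, smul_zero]
    · intro hmem; exact absurd (Finset.mem_univ i) hmem
  have hsumAρA : ∑ i', A i' * ρG * A i' = ρG := by
    simp only [hAρA]
    rw [hρ]
  have hq' : ∀ i f, q i f = (((Zi : ℂ))⁻¹ * w i) * (A i * B f).trace := by
    intro i f
    rw [hq i f]
    have h0 : ∑ i', (A i' * ρG * A i' * B f).trace = (ρG * B f).trace := by
      rw [← Matrix.trace_sum, ← Finset.sum_mul, hsumAρA]
    rw [h0, sub_self, mul_zero, add_zero, hAρA, smul_mul_assoc, Matrix.trace_smul]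
    simp [smul_eq_mul]
  have hterm : ∀ i f, q i f * Complex.exp (-(β : ℂ) * ((E' f : ℂ) - (E i : ℂ)))
      = ((Zi : ℂ))⁻¹ * (((Real.exp (-β * E' f) : ℝ) : ℂ) * (A i * B f).trace) := by
    intro i f
    rw [hq' i f]
    have : w i * Complex.exp (-(β : ℂ) * ((E' f : ℂ) - (E i : ℂ)))
        = ((Real.exp (-β * E' f) : ℝ) : ℂ) := by
      rw [hwc i, ← Complex.exp_add,
        show -(β : ℂ) * (E i : ℂ) + -(β : ℂ) * ((E' f : ℂ) - (E i : ℂ))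
          = ((-β * E' f : ℝ) : ℂ) by push_cast; ring]
      exact (Complex.ofReal_exp _).symm
    calc (((Zi : ℂ))⁻¹ * w i) * (A i * B f).trace
          * Complex.exp (-(β : ℂ) * ((E' f : ℂ) - (E i : ℂ)))
        = ((Zi : ℂ))⁻¹ * ((w i * Complex.exp (-(β : ℂ) * ((E' f : ℂ) - (E i : ℂ))))
            * (A i * B f).trace) := by ring
      _ = ((Zi : ℂ))⁻¹ * (((Real.exp (-β * E' f) : ℝ) : ℂ) * (A i * B f).trace) := by
          rw [this]
  calc ∑ i, ∑ f, q i f * Complex.exp (-(β : ℂ) * ((E' f : ℂ) - (E i : ℂ)))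
      = ∑ f, ∑ i, ((Zi : ℂ))⁻¹ * (((Real.exp (-β * E' f) : ℝ) : ℂ) * (A i * B f).trace) := by
        rw [Finset.sum_comm]
        exact Finset.sum_congr rfl fun f _ => Finset.sum_congr rfl fun i _ => hterm i f
    _ = ∑ f, ((Zi : ℂ))⁻¹ * (((Real.exp (-β * E' f) : ℝ) : ℂ) * (B f).trace) := by
        refine Finset.sum_congr rfl fun f _ => ?_
        rw [← Finset.mul_sum, ← Finset.mul_sum, ← Matrix.trace_sum, ← Finset.sum_mul, hAsum,
          one_mul]
    _ = ((Zi : ℂ))⁻¹ * (Zf : ℂ) := by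
        rw [← Finset.mul_sum]
        congr 1
        rw [hZf]
        push_cast
        exact (Finset.sum_congr rfl fun f _ => by
          rw [trace_eq_rank (B f) (hBherm f) (hBproj f)]; ring).symm
    _ = (Zf : ℂ) / (Zi : ℂ) := by rw [div_eq_mul_inv]; ring
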